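/- Let p be a prime, and let n, m, i be nonnegative integers with m ≤ n and 1 ≤ i ≤ p−1. Then C(n·p, m·p + i) ≡ (m+1) · C(n, m+1) · C(p, i) (mod p^2). -/

import Mathlib

open Finset

private lemma modeq_sum {n : ℤ} {s : Finset ℕ} {f g : ℕ → ℤ}
    (h : ∀ j ∈ s, f j ≡ g j [ZMOD n]) :
    (∑ j ∈ s, f j) ≡ ∑ j ∈ s, g j [ZMOD n] := by
  classical
  induction s using Finset.induction with
  | empty => simp
  | insert _ _ hx ih =>
      simp only [Finset.sum_insert hx]
      exact (h _ (Finset.mem_insert_self _ _)).add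
        (ih fun j hj => h j (Finset.mem_insert_of_mem hj))

private lemma lemA (p : ℕ) (hp : p.Prime) (N k : ℕ) (hk : ¬ p ∣ k) :
    (p : ℤ) ∣ ((N * p).choose k : ℤ) := by
  haveI : Fact p.Prime := ⟨hp⟩
  have h := Choose.choose_modEq_choose_mod_mul_choose_div (p := p) (n := N * p) (k := k)
  have h0 : (N * p) % p = 0 := Nat.mul_mod_left N p
  have hk0 : k % p ≠ 0 := fun h' => hk (Nat.dvd_of_mod_eq_zero h')
  rw [h0, Nat.choose_eq_zero_of_lt (Nat.pos_of_ne_zero hk0)] at h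
  simpa using h.dvd

private lemma lemB (p : ℕ) (hp : p.Prime) (N m : ℕ) :
    ((N * p).choose (m * p) : ℤ) ≡ (N.choose m : ℤ) [ZMOD (p : ℤ)] := by
  haveI : Fact p.Prime := ⟨hp⟩
  have h := Choose.choose_modEq_choose_mod_mul_choose_div (p := p) (n := N * p) (k := m * p)
  have hpos := hp.pos
  rw [Nat.mul_mod_left, Nat.mul_mod_left, Nat.mul_div_cancel _ hpos,
    Nat.mul_div_cancel _ hpos] at h
  simpa using h

private lemma key (p : ℕ) (hp : p.Prime) (i : ℕ) (hi1 : 1 ≤ i) (hi2 : i ≤ p - 1) :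
    ∀ n m : ℕ, (((n * p).choose (m * p + i) : ℤ)) ≡
      (m + 1) * (n.choose (m + 1)) * (p.choose i) [ZMOD ((p : ℤ) ^ 2)] := by
  haveI : Fact p.Prime := ⟨hp⟩
  have hp2 : 2 ≤ p := hp.two_le
  have hip : i < p := by omega
  intro n
  induction n with
  | zero =>
      intro m
      rw [Nat.zero_mul, Nat.choose_eq_zero_of_lt (by omega),
        Nat.choose_eq_zero_of_lt (by omega)]
      simp
  | succ n ih =>
      intro m
      have hvdm : ((n + 1) * p).choose (m * p + i)
          = ∑ j ∈ range (m * p + i + 1), p.choose j * (n * p).choose (m * p + i - j) := by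
        have h1 : (n + 1) * p = p + n * p := by ring
        rw [h1, Nat.add_choose_eq]
        exact Finset.Nat.sum_antidiagonal_eq_sum_range_succ
          (fun a b => p.choose a * (n * p).choose b) (m * p + i)
      have hsum : (((n + 1) * p).choose (m * p + i) : ℤ)
          = ∑ j ∈ range (m * p + i + 1),
              (p.choose j : ℤ) * ((n * p).choose (m * p + i - j)) := by
        rw [hvdm]; push_cast; ring
      rw [hsum]
      have hterm : ∀ j ∈ range (m * p + i + 1),
          (p.choose j : ℤ) * ((n * p).choose (m * p + i - j)) ≡
          ((if j = 0 then ((m : ℤ) + 1) * (n.choose (m + 1)) * (p.choose i) else 0)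
            + (if j = i then ((p.choose i : ℤ)) * (n.choose m) else 0)
            + (if j = p then (m : ℤ) * (n.choose m) * (p.choose i) else 0))
            [ZMOD ((p : ℤ) ^ 2)] := by
        intro j hj
        rw [Finset.mem_range] at hj
        rcases eq_or_ne j 0 with hj0 | hj0
        · rw [if_pos hj0, if_neg (by omega), if_neg (by omega), add_zero, add_zero, hj0]
          simpa using ih m
        · rcases eq_or_ne j i with hji | hji
          · rw [if_neg hj0, if_pos hji, if_neg (by omega), add_zero, zero_add, hji]
            have hki : m * p + i - i = m * p := by omega
            rw [hki]
            obtain ⟨c, hc⟩ := Nat.Prime.dvd_choose_self hp (by omega) hip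
            have hc' : (p.choose i : ℤ) = p * c := by exact_mod_cast hc
            obtain ⟨d, hd⟩ := Int.ModEq.dvd (lemB p hp n m)
            rw [hc']
            refine Int.modEq_iff_dvd.mpr ⟨c * d, ?_⟩
            linear_combination (p : ℤ) * (c : ℤ) * hd
          · rcases eq_or_ne j p with hjp | hjp
            · rw [if_neg hj0, if_neg hji, if_pos hjp, zero_add, zero_add, hjp]
              have hm1 : 1 ≤ m := by
                rcases Nat.eq_zero_or_pos m with rfl | hm
                · simp only [Nat.zero_mul, Nat.zero_add] at hj; omega
                · exact hm
              have hkp : m * p + i - p = (m - 1) * p + i := by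
                have h2 : (m - 1) * p + p = m * p := by
                  rcases Nat.exists_eq_add_of_le hm1 with ⟨m', rfl⟩
                  simp [Nat.add_mul, Nat.add_comm]
                omega
              rw [hkp, Nat.choose_self]
              have h3 := ih (m - 1)
              have hmc : (m - 1 : ℕ) + 1 = m := by omega
              rw [hmc] at h3
              calc (1 : ℤ) * ((n * p).choose ((m - 1) * p + i))
                  = ((n * p).choose ((m - 1) * p + i) : ℤ) := by ring
                _ ≡ ((m - 1 : ℕ) + 1) * (n.choose m) * (p.choose i)
                    [ZMOD ((p : ℤ) ^ 2)] := h3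
                _ = (m : ℤ) * (n.choose m) * (p.choose i) := by
                    have : ((m - 1 : ℕ) : ℤ) = (m : ℤ) - 1 := by
                      push_cast [hm1]; ring
                    rw [this]; ring
            · rw [if_neg hj0, if_neg hji, if_neg hjp, add_zero, add_zero]
              rcases lt_or_ge p j with hpj | hjp'
              · rw [Nat.choose_eq_zero_of_lt hpj]; simp
              · obtain ⟨c, hc⟩ := Nat.Prime.dvd_choose_self hp hj0 (by omega)
                have hnd : ¬ p ∣ (m * p + i - j) := by
                  intro hdvd
                  have hjk : j ≤ m * p + i := by omega
                  have hme : j ≡ m * p + i [MOD p] := (Nat.modEq_iff_dvd' hjk).mpr hdvd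
                  have h1 : j % p = (m * p + i) % p := hme
                  have h2 : (m * p + i) % p = i := by
                    rw [Nat.mul_comm m p, Nat.mul_add_mod]
                    exact Nat.mod_eq_of_lt hip
                  have h3 : j % p = j := Nat.mod_eq_of_lt (by omega)
                  omega
                obtain ⟨d, hd⟩ := lemA p hp n (m * p + i - j) hnd
                have hc' : (p.choose j : ℤ) = p * c := by exact_mod_cast hc
                rw [hc', hd]
                have he : (p : ℤ) * c * ((p : ℤ) * d) = (p : ℤ) ^ 2 * (c * d) := by ring
                rw [he]
                exact (Int.modEq_zero_iff_dvd).mpr ⟨c * d, rfl⟩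
      refine (modeq_sum hterm).trans ?_
      rw [Finset.sum_add_distrib, Finset.sum_add_distrib,
        Finset.sum_ite_eq' (range (m * p + i + 1)) 0
          (fun _ => ((m : ℤ) + 1) * (n.choose (m + 1)) * (p.choose i)),
        Finset.sum_ite_eq' (range (m * p + i + 1)) i
          (fun _ => ((p.choose i : ℤ)) * (n.choose m)),
        Finset.sum_ite_eq' (range (m * p + i + 1)) p
          (fun _ => (m : ℤ) * (n.choose m) * (p.choose i))]
      rw [if_pos (by simp : (0 : ℕ) ∈ range (m * p + i + 1)),
        if_pos (by simp only [Finset.mem_range]; omega : i ∈ range (m * p + i + 1))]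
      rcases Nat.eq_zero_or_pos m with rfl | hm
      · rw [if_neg (by simp only [Finset.mem_range]; omega : ¬ p ∈ range (0 * p + i + 1))]
        have h1 : (n + 1).choose 1 = n + 1 := Nat.choose_one_right _
        have h0 : n.choose 0 = 1 := Nat.choose_zero_right _
        rw [h1, h0]
        have h2 : n.choose (0 + 1) = n.choose 1 := rfl
        rw [h2, Nat.choose_one_right]
        push_cast
        ring_nf
        rfl
      · rw [if_pos (by
          simp only [Finset.mem_range]
          have : 1 * p ≤ m * p := Nat.mul_le_mul_right p hm
          omega : p ∈ range (m * p + i + 1))]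
        have hpas : (n + 1).choose (m + 1) = n.choose m + n.choose (m + 1) :=
          Nat.succ_sub_one (n.choose m) ▸ Nat.choose_succ_succ n m
        rw [hpas]
        push_cast
        ring_nf
        rfl

theorem stmt3 (p n m i : ℕ) (hp : p.Prime) (hmn : m ≤ n)
    (hi1 : 1 ≤ i) (hi2 : i ≤ p - 1) :
    (((n * p).choose (m * p + i) : ℤ)) ≡
      (m + 1) * (n.choose (m + 1)) * (p.choose i) [ZMOD ((p : ℤ) ^ 2)] := by
  exact key p hp i hi1 hi2 n m
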